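/- Let δ be a derivation of F_q(z) satisfying δ^p = γδ with γ ∈ K (the constant field). Then for every nonzero c ∈ F_q(z), the element L(c) = δ(c)/c is a right root of x^p − γx in the Ore extension F_q(z)[x; δ], i.e., x − L(c) right-divides x^p − γx. -/

import Mathlib

/-- `N_k(a)`: `N_0(a) = 1`, `N_{k+1}(a) = N_k(a)·a + δ(N_k(a))`. -/
def Nrec {F : Type*} [Field F] (δ : F → F) (a : F) : ℕ → F
  | 0 => 1
  | k + 1 => Nrec δ a k * a + δ (Nrec δ a k)

/-- If `δ` is a derivation of `F_q(z)` with `δ^p = γ·δ` and `γ` a constant, then for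
every nonzero `c`, the logarithmic derivative `L(c) = δ(c)/c` is a right root of
`x^p − γx` in `F_q(z)[x;δ]`, i.e. the right evaluation
`(x^p − γx)[L(c)] = N_p(L(c)) − γ·N_1(L(c))` vanishes (equivalently, `x − L(c)`
right-divides `x^p − γx`). -/
theorem logderiv_is_right_root (Fq : Type*) [Field Fq] [Fintype Fq] (p : ℕ) [Fact p.Prime]
    [CharP Fq p]
    (δ : RatFunc Fq → RatFunc Fq)
    (hadd : ∀ a b : RatFunc Fq, δ (a + b) = δ a + δ b)
    (hmul : ∀ a b : RatFunc Fq, δ (a * b) = a * δ b + δ a * b)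
    (γ : RatFunc Fq) (hγ : δ γ = 0)
    (hp : ∀ f : RatFunc Fq, δ^[p] f = γ * δ f)
    (c : RatFunc Fq) (hc : c ≠ 0) :
    Nrec δ (δ c / c) p - γ * Nrec δ (δ c / c) 1 = 0 := by
  have key : ∀ k, Nrec δ (δ c / c) k = δ^[k] c / c := by
    intro k
    induction k with
    | zero => simp [Nrec, div_self hc]
    | succ k ih =>
      have h1 : δ (δ^[k] c) = (δ^[k] c / c) * δ c + δ (δ^[k] c / c) * c := by
        conv_lhs => rw [← div_mul_cancel₀ (δ^[k] c) hc]
        exact hmul _ _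
      have h2 : δ (δ^[k] c / c) = (δ (δ^[k] c) - (δ^[k] c / c) * δ c) / c := by
        rw [h1]; field_simp; ring
      rw [Nrec, ih, h2, Function.iterate_succ_apply']
      field_simp
      ring
  rw [key, key, hp, Function.iterate_one]
  field_simp
  ring
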